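/- Let α ∈ ℝ and set δ := −α/2. Let v : ℝ → 𝒮(ℝ;ℂ) be a continuously differentiable curve in the Schwartz space, written v(t,x), solving for all (t,x): i∂ₜv + ∂ₓ²v − α v² ∂ₓ(v*) − (α²/2) v³ (v*)² = 0, where v*(t,x) := conj(v(t,−x)). Define u(t,x) := v(t,x)·exp(δ·∂ₓ⁻¹(v(t,·) v*(t,·))(x)). Then u solves the nonlocal derivative NLS: for all (t,x), i∂ₜu + ∂ₓ²u + α u u* ∂ₓu = 0, where u*(t,x) := conj(u(t,−x)). -/

import Mathlib

open MeasureTheory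

/-- The antiderivative `∂ₓ⁻¹ f (x) = ½(∫_{-∞}^x f − ∫_x^∞ f)`. -/
noncomputable def pinv (f : ℝ → ℂ) (x : ℝ) : ℂ :=
  (1 / 2 : ℂ) * ((∫ y in Set.Iic x, f y) - ∫ y in Set.Ici x, f y)

open Filter Metric


lemma integrable_decay {f : ℝ → ℂ} (hm : AEStronglyMeasurable f) (K : ℝ)
    (hb : ∀ y, ‖f y‖ ≤ K / (1 + y ^ 2)) : Integrable f := by
  refine Integrable.mono' (integrable_inv_one_add_sq.const_mul K) hm ?_
  filter_upwards with y
  simpa [div_eq_mul_inv, one_div] using hb y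

lemma tendsto_decay_atTop {f : ℝ → ℂ} (K : ℝ)
    (hb : ∀ y, ‖f y‖ ≤ K / (1 + y ^ 2)) : Tendsto f atTop (nhds 0) := by
  apply squeeze_zero_norm hb
  have h : Tendsto (fun y : ℝ => 1 + y ^ 2) atTop atTop :=
    tendsto_atTop_add_const_left _ 1 (tendsto_pow_atTop two_ne_zero)
  exact Tendsto.const_div_atTop h K

lemma tendsto_decay_atBot {f : ℝ → ℂ} (K : ℝ)
    (hb : ∀ y, ‖f y‖ ≤ K / (1 + y ^ 2)) : Tendsto f atBot (nhds 0) := by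
  have h1 : Tendsto (fun y : ℝ => f (-y)) atTop (nhds 0) := by
    apply tendsto_decay_atTop K
    intro y
    simpa [neg_sq] using hb (-y)
  have h2 := h1.comp tendsto_neg_atBot_atTop
  have : ((fun y => f (-y)) ∘ Neg.neg) = f := by funext y; simp
  rwa [this] at h2

lemma schwartz_decay (f : SchwartzMap ℝ ℂ) (y : ℝ) :
    ‖f y‖ ≤ (SchwartzMap.seminorm ℝ 0 0 f + SchwartzMap.seminorm ℝ 2 0 f) / (1 + y ^ 2) := by
  rw [le_div_iff₀ (by positivity)]
  have h0 := SchwartzMap.norm_le_seminorm ℝ f y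
  have h2 := SchwartzMap.norm_pow_mul_le_seminorm ℝ f 2 y
  have : ‖f y‖ * (1 + y ^ 2) = ‖f y‖ + ‖y‖ ^ 2 * ‖f y‖ := by
    simp [Real.norm_eq_abs, sq_abs]; ring
  rw [this]
  exact add_le_add h0 h2

lemma seminorm_bounded_on_Icc (v : ℝ → SchwartzMap ℝ ℂ) (hv : Continuous v) (k n : ℕ)
    (a b : ℝ) : ∃ C, ∀ s ∈ Set.Icc a b, SchwartzMap.seminorm ℝ k n (v s) ≤ C := by
  have hc : Continuous fun s => SchwartzMap.seminorm ℝ k n (v s) := by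
    have := (schwartz_withSeminorms ℝ ℝ ℂ).continuous_seminorm (k, n)
    exact this.comp hv
  obtain ⟨C, hC⟩ := (isCompact_Icc (a := a) (b := b)).bddAbove_image hc.continuousOn
  exact ⟨C, fun s hs => hC ⟨s, hs, rfl⟩⟩

lemma pinv_eq {f : ℝ → ℂ} (hf : Integrable f) (x : ℝ) :
    pinv f x = (∫ y in Set.Iic x, f y) - (1 / 2 : ℂ) * ∫ y, f y := by
  have h : (∫ y in Set.Iic x, f y) + (∫ y in Set.Ioi x, f y) = ∫ y, f y := by
    have := integral_add_compl (measurableSet_Iic (a := x)) hf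
    rwa [Set.compl_Iic] at this
  rw [pinv, integral_Ici_eq_integral_Ioi,
    show (∫ y in Set.Ioi x, f y) = (∫ y, f y) - ∫ y in Set.Iic x, f y by rw [← h]; ring]
  ring

lemma pinv_hasDerivAt {f : ℝ → ℂ} (hf : Integrable f) (hc : Continuous f) (x : ℝ) :
    HasDerivAt (pinv f) (f x) x := by
  have key : pinv f = fun z =>
      ((∫ y in Set.Iic 0, f y) + ∫ y in (0:ℝ)..z, f y) - (1 / 2 : ℂ) * ∫ y, f y := by
    funext z
    rw [pinv_eq hf]
    have := intervalIntegral.integral_Iic_sub_Iic (hf.integrableOn) (hf.integrableOn) (a := 0) (b := z)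
    rw [show (∫ y in Set.Iic z, f y) = (∫ y in Set.Iic 0, f y) + ∫ y in (0:ℝ)..z, f y by
      rw [← this]; ring]
  rw [key]
  have h := intervalIntegral.integral_hasDerivAt_right
    (hf.intervalIntegrable (a := 0) (b := x))
    (hc.stronglyMeasurableAtFilter volume (nhds x)) hc.continuousAt
  simpa using (h.const_add (∫ y in Set.Iic 0, f y)).sub_const ((1 / 2 : ℂ) * ∫ y, f y)

lemma pinv_deriv_eq {H H' : ℝ → ℂ} (hd : ∀ y, HasDerivAt H (H' y) y)
    (hi : Integrable H') (hbot : Filter.Tendsto H atBot (nhds 0))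
    (htop : Filter.Tendsto H atTop (nhds 0)) (x : ℝ) : pinv H' x = H x := by
  have h1 : ∫ y in Set.Iic x, H' y = H x - 0 :=
    integral_Iic_of_hasDerivAt_of_tendsto' (fun y _ => hd y) hi.integrableOn hbot
  have h2 : ∫ y in Set.Ici x, H' y = 0 - H x := by
    rw [integral_Ici_eq_integral_Ioi]
    exact integral_Ioi_of_hasDerivAt_of_tendsto' (fun y _ => hd y) hi.integrableOn htop
  rw [pinv, h1, h2]
  ring

lemma pinv_const_mul (c : ℂ) (f : ℝ → ℂ) (x : ℝ) :
    pinv (fun y => c * f y) x = c * pinv f x := by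
  simp only [pinv, integral_const_mul]
  ring

lemma decay_mul_bound (f : SchwartzMap ℝ ℂ) {b : ℂ} {B : ℝ} (hb : ‖b‖ ≤ B) (y : ℝ) :
    ‖f y * b‖ ≤ ((SchwartzMap.seminorm ℝ 0 0 f + SchwartzMap.seminorm ℝ 2 0 f) * B)
      / (1 + y ^ 2) := by
  have h1 := schwartz_decay f y
  calc ‖f y * b‖ = ‖f y‖ * ‖b‖ := norm_mul _ _
    _ ≤ ((SchwartzMap.seminorm ℝ 0 0 f + SchwartzMap.seminorm ℝ 2 0 f) / (1 + y ^ 2)) * B :=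
        mul_le_mul h1 hb (norm_nonneg b) (by positivity)
    _ = _ := by ring

lemma conj_neg_norm_le (h : SchwartzMap ℝ ℂ) (y : ℝ) :
    ‖(starRingEnd ℂ) (h (-y))‖ ≤ SchwartzMap.seminorm ℝ 0 0 h := by
  simpa using SchwartzMap.norm_le_seminorm ℝ h (-y)

lemma continuous_mul_conj_neg (f h : SchwartzMap ℝ ℂ) :
    Continuous fun y => f y * (starRingEnd ℂ) (h (-y)) :=
  f.continuous.mul (continuous_star.comp (h.continuous.comp continuous_neg))

lemma integrable_mul_conj_neg (f h : SchwartzMap ℝ ℂ) :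
    Integrable fun y => f y * (starRingEnd ℂ) (h (-y)) := by
  refine integrable_decay (continuous_mul_conj_neg f h).aestronglyMeasurable
    ((SchwartzMap.seminorm ℝ 0 0 f + SchwartzMap.seminorm ℝ 2 0 f)
      * SchwartzMap.seminorm ℝ 0 0 h) fun y => ?_
  exact decay_mul_bound f (conj_neg_norm_le h y) y

lemma time_deriv_integral (v vt : ℝ → SchwartzMap ℝ ℂ) (hv : Continuous v) (hvt : Continuous vt)
    (hderiv : ∀ t x : ℝ, HasDerivAt (fun τ => v τ x) (vt t x) t) (t : ℝ) (μ : Measure ℝ)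
    (hμ : ∀ g : ℝ → ℂ, Integrable g volume → Integrable g μ)
    (hμr : ∀ g : ℝ → ℝ, Integrable g volume → Integrable g μ) :
    HasDerivAt (fun s => ∫ y, v s y * (starRingEnd ℂ) (v s (-y)) ∂μ)
      (∫ y, (vt t y * (starRingEnd ℂ) (v t (-y)) + v t y * (starRingEnd ℂ) (vt t (-y))) ∂μ) t := by
  obtain ⟨C1, hC1⟩ := seminorm_bounded_on_Icc v hv 0 0 (t - 1) (t + 1)
  obtain ⟨C2, hC2⟩ := seminorm_bounded_on_Icc v hv 2 0 (t - 1) (t + 1)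
  obtain ⟨D1, hD1⟩ := seminorm_bounded_on_Icc vt hvt 0 0 (t - 1) (t + 1)
  obtain ⟨D2, hD2⟩ := seminorm_bounded_on_Icc vt hvt 2 0 (t - 1) (t + 1)
  have htI : t ∈ Set.Icc (t - 1) (t + 1) := by constructor <;> linarith
  have hC1n : 0 ≤ C1 := le_trans (apply_nonneg _ _) (hC1 t htI)
  have hC2n : 0 ≤ C2 := le_trans (apply_nonneg _ _) (hC2 t htI)
  have hD1n : 0 ≤ D1 := le_trans (apply_nonneg _ _) (hD1 t htI)
  have hD2n : 0 ≤ D2 := le_trans (apply_nonneg _ _) (hD2 t htI)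
  have hball : ∀ s ∈ Metric.ball t 1, s ∈ Set.Icc (t - 1) (t + 1) := by
    intro s hs
    rw [Metric.mem_ball, Real.dist_eq, abs_lt] at hs
    constructor <;> linarith [hs.1, hs.2]
  set K : ℝ := (D1 + D2) * C1 + (C1 + C2) * D1 with hK
  have key := hasDerivAt_integral_of_dominated_loc_of_deriv_le (μ := μ)
    (F := fun s y => v s y * (starRingEnd ℂ) (v s (-y)))
    (F' := fun s y => vt s y * (starRingEnd ℂ) (v s (-y)) + v s y * (starRingEnd ℂ) (vt s (-y)))
    (x₀ := t) (s := Metric.ball t 1) (bound := fun y => K / (1 + y ^ 2)) (Metric.ball_mem_nhds t one_pos)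
    (Filter.Eventually.of_forall fun s =>
      ((continuous_mul_conj_neg (v s) (v s)).aestronglyMeasurable (μ := μ)))
    (hμ _ (integrable_mul_conj_neg (v t) (v t)))
    (((continuous_mul_conj_neg (vt t) (v t)).add
      (continuous_mul_conj_neg (v t) (vt t))).aestronglyMeasurable (μ := μ))
    ?_ ?_ ?_
  · exact key.2
  · refine Filter.Eventually.of_forall fun y => fun s hs => ?_
    have hsI := hball s hs
    have b1 : ‖vt s y * (starRingEnd ℂ) (v s (-y))‖ ≤ ((D1 + D2) * C1) / (1 + y ^ 2) := by
      refine le_trans (decay_mul_bound (vt s) (le_trans (conj_neg_norm_le (v s) y) (hC1 s hsI)) y) ?_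
      gcongr
      · exact hD1 s hsI
      · exact hD2 s hsI
    have b2 : ‖v s y * (starRingEnd ℂ) (vt s (-y))‖ ≤ ((C1 + C2) * D1) / (1 + y ^ 2) := by
      refine le_trans (decay_mul_bound (v s) (le_trans (conj_neg_norm_le (vt s) y) (hD1 s hsI)) y) ?_
      gcongr
      · exact hC1 s hsI
      · exact hC2 s hsI
    calc ‖vt s y * (starRingEnd ℂ) (v s (-y)) + v s y * (starRingEnd ℂ) (vt s (-y))‖
        ≤ ‖vt s y * (starRingEnd ℂ) (v s (-y))‖ + ‖v s y * (starRingEnd ℂ) (vt s (-y))‖ :=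
          norm_add_le _ _
      _ ≤ ((D1 + D2) * C1) / (1 + y ^ 2) + ((C1 + C2) * D1) / (1 + y ^ 2) := add_le_add b1 b2
      _ = K / (1 + y ^ 2) := by rw [hK, ← add_div]
  · refine hμr _ ?_
    have h2 : Integrable (fun y : ℝ => K * (1 + y ^ 2)⁻¹) volume :=
      integrable_inv_one_add_sq.const_mul K
    refine h2.congr ?_
    filter_upwards with y
    rw [div_eq_mul_inv]
  · refine Filter.Eventually.of_forall fun y => fun s _ => ?_
    exact (hderiv s y).mul ((hderiv s (-y)).star)

lemma pinv_conj_neg {f : ℝ → ℂ} (hsym : ∀ y, (starRingEnd ℂ) (f (-y)) = f y) (x : ℝ) :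
    (starRingEnd ℂ) (pinv f (-x)) = - pinv f x := by
  have hconj : ∀ z, (starRingEnd ℂ) (f z) = f (-z) := by
    intro z
    have := hsym (-z)
    rw [neg_neg] at this
    rw [this]
  rw [pinv, map_mul, map_sub, ← integral_conj, ← integral_conj]
  simp_rw [hconj]
  rw [integral_comp_neg_Iic, integral_Ici_eq_integral_Ioi, integral_comp_neg_Ioi, neg_neg]
  rw [pinv, integral_Ici_eq_integral_Ioi]
  have h12 : (starRingEnd ℂ) (1 / 2 : ℂ) = 1 / 2 := by rw [map_div₀, map_one, map_ofNat]
  rw [h12]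
  ring

lemma time_deriv_pinv (v vt : ℝ → SchwartzMap ℝ ℂ) (hv : Continuous v) (hvt : Continuous vt)
    (hderiv : ∀ t x : ℝ, HasDerivAt (fun τ => v τ x) (vt t x) t) (t x : ℝ) :
    HasDerivAt (fun s => pinv (fun y => v s y * (starRingEnd ℂ) (v s (-y))) x)
      (pinv (fun y => vt t y * (starRingEnd ℂ) (v t (-y))
        + v t y * (starRingEnd ℂ) (vt t (-y))) x) t := by
  have h1 := time_deriv_integral v vt hv hvt hderiv t (volume.restrict (Set.Iic x))
    (fun g hg => hg.restrict) (fun g hg => hg.restrict)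
  have h2 := time_deriv_integral v vt hv hvt hderiv t volume (fun g hg => hg) (fun g hg => hg)
  have hIGt : Integrable (fun y => vt t y * (starRingEnd ℂ) (v t (-y))
      + v t y * (starRingEnd ℂ) (vt t (-y))) :=
    (integrable_mul_conj_neg (vt t) (v t)).add (integrable_mul_conj_neg (v t) (vt t))
  have hfun : (fun s => pinv (fun y => v s y * (starRingEnd ℂ) (v s (-y))) x) =
      fun s => (∫ y in Set.Iic x, v s y * (starRingEnd ℂ) (v s (-y)))
        - (1 / 2 : ℂ) * ∫ y, v s y * (starRingEnd ℂ) (v s (-y)) :=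
    funext fun s => pinv_eq (integrable_mul_conj_neg (v s) (v s)) x
  rw [hfun, pinv_eq hIGt x]
  exact h1.sub (h2.const_mul _)

/-- If `v(t,·)` is a continuously differentiable curve of Schwartz functions (with time
derivative `vt`) solving `i vₜ + ∂ₓ²v − α v² ∂ₓ(v*) − (α²/2) v³ (v*)² = 0`, and `δ = −α/2`,
then `u = v · exp(δ ∂ₓ⁻¹(v v*))` solves the nonlocal derivative NLS
`i uₜ + ∂ₓ²u + α u u* ∂ₓu = 0`, where `w*(t,x) = conj(w(t,−x))`. -/
theorem stmt_9 (α δ : ℝ) (hδ : δ = -α / 2) (v vt : ℝ → SchwartzMap ℝ ℂ)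
    (hv : Continuous v) (hvt : Continuous vt)
    (hderiv : ∀ t x : ℝ, HasDerivAt (fun τ => v τ x) (vt t x) t)
    (heq : ∀ t x : ℝ,
      Complex.I * vt t x + deriv (deriv (fun y => v t y)) x
        - (α : ℂ) * (v t x) ^ 2 * deriv (fun y => (starRingEnd ℂ) (v t (-y))) x
        - ((α : ℂ) ^ 2 / 2) * (v t x) ^ 3 * ((starRingEnd ℂ) (v t (-x))) ^ 2 = 0)
    (u : ℝ → ℝ → ℂ)
    (hu : ∀ t x : ℝ, u t x =
      v t x * Complex.exp ((δ : ℂ) * pinv (fun y => v t y * (starRingEnd ℂ) (v t (-y))) x)) :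
    ∀ t x : ℝ,
      Complex.I * deriv (fun τ => u τ x) t + deriv (deriv (fun y => u t y)) x
        + (α : ℂ) * u t x * (starRingEnd ℂ) (u t (-x)) * deriv (fun y => u t y) x = 0 := by
  intro t x
  have hδℂ : (δ : ℂ) = -(α : ℂ) / 2 := by rw [hδ]; push_cast; ring
  -- spatial derivatives of v t and its "star"
  have hVd : ∀ y : ℝ, HasDerivAt (fun z => v t z) ((SchwartzMap.derivCLM ℝ ℂ (v t)) y) y := by
    intro y
    have h := ((v t).differentiableAt (x := y)).hasDerivAt
    rw [← SchwartzMap.derivCLM_apply (𝕜 := ℝ)] at h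
    exact h
  have hV'd : ∀ y : ℝ, HasDerivAt (fun z => (SchwartzMap.derivCLM ℝ ℂ (v t)) z) ((SchwartzMap.derivCLM ℝ ℂ (SchwartzMap.derivCLM ℝ ℂ (v t))) y) y := by
    intro y
    have h := ((SchwartzMap.derivCLM ℝ ℂ (v t)).differentiableAt (x := y)).hasDerivAt
    rw [← SchwartzMap.derivCLM_apply (𝕜 := ℝ)] at h
    exact h
  have hW : ∀ y : ℝ, HasDerivAt (fun z => (starRingEnd ℂ) (v t (-z))) (-((starRingEnd ℂ) ((SchwartzMap.derivCLM ℝ ℂ (v t)) (-y)))) y := by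
    intro y
    have h0 := (HasDerivAt.scomp_of_eq y (hVd (-y)) (hasDerivAt_neg (x := y)) rfl).star
    simpa [Function.comp, Complex.star_def, star_smul, neg_smul, one_smul] using h0
  have hW1 : ∀ y : ℝ, HasDerivAt (fun z => -((starRingEnd ℂ) ((SchwartzMap.derivCLM ℝ ℂ (v t)) (-z)))) ((starRingEnd ℂ) ((SchwartzMap.derivCLM ℝ ℂ (SchwartzMap.derivCLM ℝ ℂ (v t))) (-y))) y := by
    intro y
    have h0 := ((HasDerivAt.scomp_of_eq y (hV'd (-y)) (hasDerivAt_neg (x := y)) rfl).star).neg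
    simpa [Function.comp, Complex.star_def, star_smul, neg_smul, one_smul, Pi.neg_def] using h0
  have hGd : ∀ y : ℝ, HasDerivAt (fun y => v t y * (starRingEnd ℂ) (v t (-y)))
      ((SchwartzMap.derivCLM ℝ ℂ (v t)) y * (starRingEnd ℂ) (v t (-y)) + v t y * -((starRingEnd ℂ) ((SchwartzMap.derivCLM ℝ ℂ (v t)) (-y)))) y := by
    intro y
    exact (hVd y).mul (hW y)
  -- pinv derivatives
  have hP : ∀ y : ℝ, HasDerivAt (pinv (fun y => v t y * (starRingEnd ℂ) (v t (-y)))) (v t y * (starRingEnd ℂ) (v t (-y))) y := by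
    intro y
    exact pinv_hasDerivAt (integrable_mul_conj_neg (v t) (v t))
      (continuous_mul_conj_neg (v t) (v t)) y
  have hE : ∀ y : ℝ, HasDerivAt (fun z => Complex.exp ((δ : ℂ) * pinv (fun y => v t y * (starRingEnd ℂ) (v t (-y))) z))
      (Complex.exp ((δ : ℂ) * pinv (fun y => v t y * (starRingEnd ℂ) (v t (-y))) y) * ((δ : ℂ) * (v t y * (starRingEnd ℂ) (v t (-y))))) y := by
    intro y
    exact ((hP y).const_mul ((δ : ℂ))).cexp
  -- the gauge equation and its conjugate-reflection
  have hEq1 : ∀ y : ℝ, Complex.I * vt t y + (SchwartzMap.derivCLM ℝ ℂ (SchwartzMap.derivCLM ℝ ℂ (v t))) y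
      - (α : ℂ) * (v t y) ^ 2 * -((starRingEnd ℂ) ((SchwartzMap.derivCLM ℝ ℂ (v t)) (-y)))
      - ((α : ℂ) ^ 2 / 2) * (v t y) ^ 3 * ((starRingEnd ℂ) (v t (-y))) ^ 2 = 0 := by
    intro y
    have h := heq t y
    have e1 : deriv (fun z => v t z) = fun z => (SchwartzMap.derivCLM ℝ ℂ (v t)) z := funext fun z => (hVd z).deriv
    rw [e1] at h
    rw [show deriv (fun z => (SchwartzMap.derivCLM ℝ ℂ (v t)) z) y = (SchwartzMap.derivCLM ℝ ℂ (SchwartzMap.derivCLM ℝ ℂ (v t))) y from (hV'd y).deriv] at h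
    rw [show deriv (fun z => (starRingEnd ℂ) (v t (-z))) y = -((starRingEnd ℂ) ((SchwartzMap.derivCLM ℝ ℂ (v t)) (-y))) from (hW y).deriv] at h
    exact h
  have hEq2 : ∀ y : ℝ, -Complex.I * (starRingEnd ℂ) (vt t (-y)) + (starRingEnd ℂ) ((SchwartzMap.derivCLM ℝ ℂ (SchwartzMap.derivCLM ℝ ℂ (v t))) (-y))
      + (α : ℂ) * ((starRingEnd ℂ) (v t (-y))) ^ 2 * (SchwartzMap.derivCLM ℝ ℂ (v t)) y
      - ((α : ℂ) ^ 2 / 2) * ((starRingEnd ℂ) (v t (-y))) ^ 3 * (v t y) ^ 2 = 0 := by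
    intro y
    have h := hEq1 (-y)
    simp only [neg_neg] at h
    have h2 := congrArg (starRingEnd ℂ) h
    simp only [map_add, map_sub, map_mul, map_neg, map_pow, map_zero, map_div₀, map_ofNat,
      Complex.conj_I, Complex.conj_ofReal, starRingEnd_self_apply] at h2
    linear_combination h2
  have hIGt_eq : ∀ y : ℝ, Complex.I * (vt t y * (starRingEnd ℂ) (v t (-y)) + v t y * (starRingEnd ℂ) (vt t (-y)))
      = v t y * (starRingEnd ℂ) ((SchwartzMap.derivCLM ℝ ℂ (SchwartzMap.derivCLM ℝ ℂ (v t))) (-y)) - (SchwartzMap.derivCLM ℝ ℂ (SchwartzMap.derivCLM ℝ ℂ (v t))) y * (starRingEnd ℂ) (v t (-y)) + (α : ℂ) * (v t y * (starRingEnd ℂ) (v t (-y))) * ((SchwartzMap.derivCLM ℝ ℂ (v t)) y * (starRingEnd ℂ) (v t (-y)) + v t y * -((starRingEnd ℂ) ((SchwartzMap.derivCLM ℝ ℂ (v t)) (-y)))) := by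
    intro y
    linear_combination ((starRingEnd ℂ) (v t (-y))) * hEq1 y - (v t y) * hEq2 y
  -- integrability and decay
  have hIGt : Integrable (fun y => vt t y * (starRingEnd ℂ) (v t (-y)) + v t y * (starRingEnd ℂ) (vt t (-y))) :=
    (integrable_mul_conj_neg (vt t) (v t)).add (integrable_mul_conj_neg (v t) (vt t))
  have hHd : ∀ y : ℝ, HasDerivAt (fun y => v t y * -((starRingEnd ℂ) ((SchwartzMap.derivCLM ℝ ℂ (v t)) (-y))) - (SchwartzMap.derivCLM ℝ ℂ (v t)) y * (starRingEnd ℂ) (v t (-y)) + ((α : ℂ) / 2) * ((v t y * (starRingEnd ℂ) (v t (-y))) * (v t y * (starRingEnd ℂ) (v t (-y))))) (v t y * (starRingEnd ℂ) ((SchwartzMap.derivCLM ℝ ℂ (SchwartzMap.derivCLM ℝ ℂ (v t))) (-y)) - (SchwartzMap.derivCLM ℝ ℂ (SchwartzMap.derivCLM ℝ ℂ (v t))) y * (starRingEnd ℂ) (v t (-y)) + (α : ℂ) * (v t y * (starRingEnd ℂ) (v t (-y))) * ((SchwartzMap.derivCLM ℝ ℂ (v t)) y * (starRingEnd ℂ)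 (v t (-y)) + v t y * -((starRingEnd ℂ) ((SchwartzMap.derivCLM ℝ ℂ (v t)) (-y))))) y := by
    intro y
    have h1 := ((hVd y).mul (hW1 y)).sub ((hV'd y).mul (hW y))
    have h2 := ((hVd y).mul (hW y)).mul ((hVd y).mul (hW y))
    have h3 := h1.add (h2.const_mul ((α : ℂ) / 2))
    exact h3.congr_deriv (by simp only [Pi.mul_apply]; ring)
  have hHb : ∀ y : ℝ, ‖v t y * -((starRingEnd ℂ) ((SchwartzMap.derivCLM ℝ ℂ (v t)) (-y))) - (SchwartzMap.derivCLM ℝ ℂ (v t)) y * (starRingEnd ℂ) (v t (-y)) + ((α : ℂ) / 2) * ((v t y * (starRingEnd ℂ) (v t (-y))) * (v t y * (starRingEnd ℂ) (v t (-y))))‖ ≤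
      ((SchwartzMap.seminorm ℝ 0 0 (v t) + SchwartzMap.seminorm ℝ 2 0 (v t))
          * SchwartzMap.seminorm ℝ 0 0 (SchwartzMap.derivCLM ℝ ℂ (v t))
        + (SchwartzMap.seminorm ℝ 0 0 (SchwartzMap.derivCLM ℝ ℂ (v t)) + SchwartzMap.seminorm ℝ 2 0 (SchwartzMap.derivCLM ℝ ℂ (v t)))
          * SchwartzMap.seminorm ℝ 0 0 (v t)
        + |α| / 2 * ((SchwartzMap.seminorm ℝ 0 0 (v t) + SchwartzMap.seminorm ℝ 2 0 (v t))
          * SchwartzMap.seminorm ℝ 0 0 (v t)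
          * (SchwartzMap.seminorm ℝ 0 0 (v t) * SchwartzMap.seminorm ℝ 0 0 (v t)))) / (1 + y ^ 2) := by
    intro y
    have t1 : ‖v t y * -((starRingEnd ℂ) ((SchwartzMap.derivCLM ℝ ℂ (v t)) (-y)))‖ ≤
        ((SchwartzMap.seminorm ℝ 0 0 (v t) + SchwartzMap.seminorm ℝ 2 0 (v t))
          * SchwartzMap.seminorm ℝ 0 0 (SchwartzMap.derivCLM ℝ ℂ (v t))) / (1 + y ^ 2) := by
      refine decay_mul_bound (v t) ?_ y
      rw [norm_neg]
      exact conj_neg_norm_le (SchwartzMap.derivCLM ℝ ℂ (v t)) y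
    have t2 : ‖(SchwartzMap.derivCLM ℝ ℂ (v t)) y * (starRingEnd ℂ) (v t (-y))‖ ≤
        ((SchwartzMap.seminorm ℝ 0 0 (SchwartzMap.derivCLM ℝ ℂ (v t)) + SchwartzMap.seminorm ℝ 2 0 (SchwartzMap.derivCLM ℝ ℂ (v t)))
          * SchwartzMap.seminorm ℝ 0 0 (v t)) / (1 + y ^ 2) :=
      decay_mul_bound (SchwartzMap.derivCLM ℝ ℂ (v t)) (conj_neg_norm_le (v t) y) y
    have hz1 : ‖v t y * (starRingEnd ℂ) (v t (-y))‖ ≤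
        ((SchwartzMap.seminorm ℝ 0 0 (v t) + SchwartzMap.seminorm ℝ 2 0 (v t))
          * SchwartzMap.seminorm ℝ 0 0 (v t)) / (1 + y ^ 2) :=
      decay_mul_bound (v t) (conj_neg_norm_le (v t) y) y
    have hz2 : ‖v t y * (starRingEnd ℂ) (v t (-y))‖ ≤
        SchwartzMap.seminorm ℝ 0 0 (v t) * SchwartzMap.seminorm ℝ 0 0 (v t) := by
      rw [norm_mul]
      exact mul_le_mul (SchwartzMap.norm_le_seminorm ℝ (v t) y) (conj_neg_norm_le (v t) y)
        (norm_nonneg _) (apply_nonneg _ _)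
    have t3 : ‖((α : ℂ) / 2) * ((v t y * (starRingEnd ℂ) (v t (-y))) * (v t y * (starRingEnd ℂ) (v t (-y))))‖ ≤
        (|α| / 2 * ((SchwartzMap.seminorm ℝ 0 0 (v t) + SchwartzMap.seminorm ℝ 2 0 (v t))
          * SchwartzMap.seminorm ℝ 0 0 (v t)
          * (SchwartzMap.seminorm ℝ 0 0 (v t) * SchwartzMap.seminorm ℝ 0 0 (v t)))) / (1 + y ^ 2) := by
      have hα2 : ‖((α : ℂ) / 2)‖ = |α| / 2 := by
        rw [norm_div, Complex.norm_real, Real.norm_eq_abs]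
        norm_num
      have hsq : ‖((v t y * (starRingEnd ℂ) (v t (-y))) * (v t y * (starRingEnd ℂ) (v t (-y))))‖ ≤
          (((SchwartzMap.seminorm ℝ 0 0 (v t) + SchwartzMap.seminorm ℝ 2 0 (v t))
            * SchwartzMap.seminorm ℝ 0 0 (v t)) / (1 + y ^ 2))
          * (SchwartzMap.seminorm ℝ 0 0 (v t) * SchwartzMap.seminorm ℝ 0 0 (v t)) := by
        rw [norm_mul]
        exact mul_le_mul hz1 hz2 (norm_nonneg _) (by positivity)
      calc ‖((α : ℂ) / 2) * ((v t y * (starRingEnd ℂ) (v t (-y))) * (v t y * (starRingEnd ℂ) (v t (-y))))‖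
          = (|α| / 2) * ‖((v t y * (starRingEnd ℂ) (v t (-y))) * (v t y * (starRingEnd ℂ) (v t (-y))))‖ := by rw [norm_mul, hα2]
        _ ≤ (|α| / 2) * ((((SchwartzMap.seminorm ℝ 0 0 (v t) + SchwartzMap.seminorm ℝ 2 0 (v t))
            * SchwartzMap.seminorm ℝ 0 0 (v t)) / (1 + y ^ 2))
            * (SchwartzMap.seminorm ℝ 0 0 (v t) * SchwartzMap.seminorm ℝ 0 0 (v t))) :=
          mul_le_mul_of_nonneg_left hsq (by positivity)
        _ = _ := by ring
    calc ‖v t y * -((starRingEnd ℂ) ((SchwartzMap.derivCLM ℝ ℂ (v t)) (-y))) - (SchwartzMap.derivCLM ℝ ℂ (v t)) y * (starRingEnd ℂ) (v t (-y)) + ((α : ℂ) / 2) * ((v t y * (starRingEnd ℂ) (v t (-y))) * (v t y * (starRingEnd ℂ) (v t (-y))))‖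
        ≤ ‖v t y * -((starRingEnd ℂ) ((SchwartzMap.derivCLM ℝ ℂ (v t)) (-y))) - (SchwartzMap.derivCLM ℝ ℂ (v t)) y * (starRingEnd ℂ) (v t (-y))‖
          + ‖((α : ℂ) / 2) * ((v t y * (starRingEnd ℂ) (v t (-y))) * (v t y * (starRingEnd ℂ) (v t (-y))))‖ := norm_add_le _ _
      _ ≤ (‖v t y * -((starRingEnd ℂ) ((SchwartzMap.derivCLM ℝ ℂ (v t)) (-y)))‖ + ‖(SchwartzMap.derivCLM ℝ ℂ (v t)) y * (starRingEnd ℂ) (v t (-y))‖)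
          + ‖((α : ℂ) / 2) * ((v t y * (starRingEnd ℂ) (v t (-y))) * (v t y * (starRingEnd ℂ) (v t (-y))))‖ :=
          add_le_add_left (norm_sub_le _ _) _
      _ ≤ (((SchwartzMap.seminorm ℝ 0 0 (v t) + SchwartzMap.seminorm ℝ 2 0 (v t))
            * SchwartzMap.seminorm ℝ 0 0 (SchwartzMap.derivCLM ℝ ℂ (v t))) / (1 + y ^ 2)
          + ((SchwartzMap.seminorm ℝ 0 0 (SchwartzMap.derivCLM ℝ ℂ (v t)) + SchwartzMap.seminorm ℝ 2 0 (SchwartzMap.derivCLM ℝ ℂ (v t)))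
            * SchwartzMap.seminorm ℝ 0 0 (v t)) / (1 + y ^ 2))
          + (|α| / 2 * ((SchwartzMap.seminorm ℝ 0 0 (v t) + SchwartzMap.seminorm ℝ 2 0 (v t))
            * SchwartzMap.seminorm ℝ 0 0 (v t)
            * (SchwartzMap.seminorm ℝ 0 0 (v t) * SchwartzMap.seminorm ℝ 0 0 (v t)))) / (1 + y ^ 2) :=
          add_le_add (add_le_add t1 t2) t3
      _ = _ := by rw [← add_div, ← add_div]
  have hIH1 : Integrable (fun y => v t y * (starRingEnd ℂ) ((SchwartzMap.derivCLM ℝ ℂ (SchwartzMap.derivCLM ℝ ℂ (v t))) (-y)) - (SchwartzMap.derivCLM ℝ ℂ (SchwartzMap.derivCLM ℝ ℂ (v t))) y * (starRingEnd ℂ) (v t (-y)) + (α : ℂ) * (v t y * (starRingEnd ℂ) (v t (-y))) * ((SchwartzMap.derivCLM ℝ ℂ (v t)) y * (starRingEnd ℂ) (v t (-y)) + v t y * -((starRingEnd ℂ) ((SchwartzMap.derivCLM ℝ ℂ (v t)) (-y))))) :=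
    (hIGt.const_mul Complex.I).congr (Filter.Eventually.of_forall fun y => hIGt_eq y)
  have hpinvGt : pinv (fun y => vt t y * (starRingEnd ℂ) (v t (-y)) + v t y * (starRingEnd ℂ) (vt t (-y))) x = -Complex.I * (v t x * -((starRingEnd ℂ) ((SchwartzMap.derivCLM ℝ ℂ (v t)) (-x))) - (SchwartzMap.derivCLM ℝ ℂ (v t)) x * (starRingEnd ℂ) (v t (-x)) + ((α : ℂ) / 2) * ((v t x * (starRingEnd ℂ) (v t (-x))) * (v t x * (starRingEnd ℂ) (v t (-x))))) := by
    have hfun2 : (fun y => vt t y * (starRingEnd ℂ) (v t (-y)) + v t y * (starRingEnd ℂ) (vt t (-y))) = fun y => -Complex.I * (v t y * (starRingEnd ℂ) ((SchwartzMap.derivCLM ℝ ℂ (SchwartzMap.derivCLM ℝ ℂ (v t))) (-y)) - (SchwartzMap.derivCLM ℝ ℂ (SchwartzMap.derivCLM ℝ ℂ (v t))) y * (starRingEnd ℂ) (v t (-y)) + (α : ℂ) * (v t y * (starRingEnd ℂ) (v t (-y))) * ((SchwartzMap.derivCLM ℝ ℂ (v t)) y * (starRingEnd ℂ) (v t (-y))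 + v t y * -((starRingEnd ℂ) ((SchwartzMap.derivCLM ℝ ℂ (v t)) (-y))))) :=
      funext fun y => by linear_combination (-Complex.I) * hIGt_eq y + (vt t y * (starRingEnd ℂ) (v t (-y)) + v t y * (starRingEnd ℂ) (vt t (-y))) * Complex.I_sq
    rw [hfun2, pinv_const_mul,
      pinv_deriv_eq hHd hIH1 (tendsto_decay_atBot _ hHb) (tendsto_decay_atTop _ hHb)]
  -- the conjugated-reflected u
  have hsym : ∀ y : ℝ, (starRingEnd ℂ) ((fun y => v t y * (starRingEnd ℂ) (v t (-y))) (-y)) = (fun y => v t y * (starRingEnd ℂ) (v t (-y))) y := by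
    intro y
    simp only [neg_neg, map_mul, starRingEnd_self_apply]
    ring
  have hconjU : (starRingEnd ℂ) (u t (-x)) = (starRingEnd ℂ) (v t (-x)) * (Complex.exp ((δ : ℂ) * pinv (fun y => v t y * (starRingEnd ℂ) (v t (-y))) x))⁻¹ := by
    rw [hu t (-x), map_mul, ← Complex.exp_conj, map_mul, Complex.conj_ofReal,
      pinv_conj_neg hsym x, mul_neg, Complex.exp_neg]
  -- the three derivative computations in the goal
  have hUt : (fun y : ℝ => u t y) = fun y => v t y * Complex.exp ((δ : ℂ) * pinv (fun y => v t y * (starRingEnd ℂ) (v t (-y))) y) := funext fun y => hu t y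
  have hU1fun : deriv (fun y : ℝ => v t y * Complex.exp ((δ : ℂ) * pinv (fun y => v t y * (starRingEnd ℂ) (v t (-y))) y)) = fun y =>
      (SchwartzMap.derivCLM ℝ ℂ (v t)) y * Complex.exp ((δ : ℂ) * pinv (fun y => v t y * (starRingEnd ℂ) (v t (-y))) y) + v t y * (Complex.exp ((δ : ℂ) * pinv (fun y => v t y * (starRingEnd ℂ) (v t (-y))) y) * ((δ : ℂ) * (v t y * (starRingEnd ℂ) (v t (-y))))) :=
    funext fun y => ((hVd y).mul (hE y)).deriv
  have hgoal1 : deriv (fun y : ℝ => u t y) x =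
      (SchwartzMap.derivCLM ℝ ℂ (v t)) x * Complex.exp ((δ : ℂ) * pinv (fun y => v t y * (starRingEnd ℂ) (v t (-y))) x) + v t x * (Complex.exp ((δ : ℂ) * pinv (fun y => v t y * (starRingEnd ℂ) (v t (-y))) x) * ((δ : ℂ) * (v t x * (starRingEnd ℂ) (v t (-x))))) := by
    rw [hUt]
    exact ((hVd x).mul (hE x)).deriv
  have hgoal2 : deriv (deriv (fun y : ℝ => u t y)) x = ((SchwartzMap.derivCLM ℝ ℂ (SchwartzMap.derivCLM ℝ ℂ (v t))) x * Complex.exp ((δ : ℂ) * pinv (fun y => v t y * (starRingEnd ℂ) (v t (-y))) x) + (SchwartzMap.derivCLM ℝ ℂ (v t)) x * (Complex.exp ((δ : ℂ) * pinv (fun y => v t y * (starRingEnd ℂ) (v t (-y))) x) * ((δ : ℂ) * (v t x * (starRingEnd ℂ) (v t (-x)))))) + ((SchwartzMap.derivCLM ℝ ℂ (v t)) x * (Complex.exp ((δ : ℂ) * pinv (fun y => v t y * (starRingEnd ℂ) (v t (-y))) x) * ((δ : ℂ) * (v t x * (starRingEnd ℂ) (v t (-x))))) + v t x * ((Complex.exp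 ((δ : ℂ) * pinv (fun y => v t y * (starRingEnd ℂ) (v t (-y))) x) * ((δ : ℂ) * (v t x * (starRingEnd ℂ) (v t (-x))))) * ((δ : ℂ) * (v t x * (starRingEnd ℂ) (v t (-x)))) + Complex.exp ((δ : ℂ) * pinv (fun y => v t y * (starRingEnd ℂ) (v t (-y))) x) * ((δ : ℂ) * ((SchwartzMap.derivCLM ℝ ℂ (v t)) x * (starRingEnd ℂ) (v t (-x)) + v t x * -((starRingEnd ℂ) ((SchwartzMap.derivCLM ℝ ℂ (v t)) (-x))))))) := by
    rw [hUt, hU1fun]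
    exact (((hV'd x).mul (hE x)).add
      ((hVd x).mul ((hE x).mul ((hGd x).const_mul ((δ : ℂ)))))).deriv
  have hTfun : (fun τ => u τ x) = fun τ =>
      v τ x * Complex.exp ((δ : ℂ) * pinv (fun y => v τ y * (starRingEnd ℂ) (v τ (-y))) x) :=
    funext fun τ => hu τ x
  have hgoalT : deriv (fun τ => u τ x) t =
      vt t x * Complex.exp ((δ : ℂ) * pinv (fun y => v t y * (starRingEnd ℂ) (v t (-y))) x) + v t x * (Complex.exp ((δ : ℂ) * pinv (fun y => v t y * (starRingEnd ℂ) (v t (-y))) x) * ((δ : ℂ) * pinv (fun y => vt t y * (starRingEnd ℂ) (v t (-y)) + v t y * (starRingEnd ℂ) (vt t (-y))) x)) := by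
    rw [hTfun]
    exact ((hderiv t x).mul
      (((time_deriv_pinv v vt hv hvt hderiv t x).const_mul ((δ : ℂ))).cexp)).deriv
  -- final assembly
  rw [hgoalT, hgoal2, hgoal1, hu t x, hconjU, hpinvGt, hδℂ]
  have hXinv : Complex.exp (-(α : ℂ) / 2 * pinv (fun y => v t y * (starRingEnd ℂ) (v t (-y))) x) * (Complex.exp (-(α : ℂ) / 2 * pinv (fun y => v t y * (starRingEnd ℂ) (v t (-y))) x))⁻¹ = 1 := mul_inv_cancel₀ (Complex.exp_ne_zero _)
  linear_combination (Complex.exp (-(α : ℂ) / 2 * pinv (fun y => v t y * (starRingEnd ℂ) (v t (-y))) x)) * hEq1 x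
    + ((α : ℂ) * (v t x) * ((starRingEnd ℂ) (v t (-x)))
      * ((SchwartzMap.derivCLM ℝ ℂ (v t)) x + (-(α : ℂ) / 2) * (v t x) * (v t x) * ((starRingEnd ℂ) (v t (-x)))) * Complex.exp (-(α : ℂ) / 2 * pinv (fun y => v t y * (starRingEnd ℂ) (v t (-y))) x)) * hXinv
    + (((α : ℂ) / 2) * v t x * (v t x * -((starRingEnd ℂ) ((SchwartzMap.derivCLM ℝ ℂ (v t)) (-x))) - (SchwartzMap.derivCLM ℝ ℂ (v t)) x * (starRingEnd ℂ) (v t (-x)) + ((α : ℂ) / 2) * ((v t x * (starRingEnd ℂ) (v t (-x))) * (v t x * (starRingEnd ℂ) (v t (-x))))) * Complex.exp (-(α : ℂ) / 2 * pinv (fun y => v t y * (starRingEnd ℂ) (v t (-y))) x)) * Complex.I_sq
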